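/- If a graph G has a biclique cover of size M (i.e., a collection of bicliques A_1×B_1,…,A_s×B_s with E(G) = ⋃_i A_i×B_i and M = Σ_i (|A_i|+|B_i|)), then G admits a 3-hop spanner with O(M) edges. -/

import Mathlib

/-- `H` is a `t`-hop spanner of `G`: a subgraph such that every edge of `G`
is connected in `H` by a path (walk) of at most `t` edges. -/
def IsHopSpanner {V : Type*} (G H : SimpleGraph V) (t : ℕ) : Prop :=
  H ≤ G ∧ ∀ u v : V, G.Adj u v → ∃ p : H.Walk u v, p.length ≤ t

/-- If a graph `G` has a biclique cover of size `M = ∑ (|Aᵢ| + |Bᵢ|)`, then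
`G` admits a 3-hop spanner with `O(M)` edges. -/
theorem biclique_cover_three_hop_spanner :
    ∃ c : ℕ, ∀ (V : Type) [Fintype V] [DecidableEq V] (G : SimpleGraph V)
      (s : ℕ) (A B : Fin s → Finset V),
      (∀ i, Disjoint (A i) (B i)) →
      (∀ i, ∀ a ∈ A i, ∀ b ∈ B i, G.Adj a b) →
      (∀ u v : V, G.Adj u v → ∃ i, (u ∈ A i ∧ v ∈ B i) ∨ (v ∈ A i ∧ u ∈ B i)) →
      ∃ H : SimpleGraph V, IsHopSpanner G H 3 ∧
        H.edgeSet.ncard ≤ c * ∑ i, ((A i).card + (B i).card) := by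
  classical
  refine ⟨1, fun V _ _ G s A B hdisj hbic hcov => ?_⟩
  -- for each biclique with both sides nonempty, keep two stars
  set F : Fin s → Finset (Sym2 V) := fun i =>
    if h : (A i).Nonempty ∧ (B i).Nonempty then
      (B i).image (fun b => s(h.1.choose, b)) ∪ (A i).image (fun a => s(h.2.choose, a))
    else ∅ with hF
  set T : Finset (Sym2 V) := Finset.univ.biUnion F with hT
  refine ⟨SimpleGraph.fromEdgeSet ↑T, ⟨?_, ?_⟩, ?_⟩
  · -- subgraph
    intro u v huv
    rw [SimpleGraph.fromEdgeSet_adj] at huv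
    obtain ⟨hmem, hne⟩ := huv
    simp only [hT, Finset.coe_biUnion, Set.mem_iUnion, Finset.mem_coe] at hmem
    obtain ⟨i, -, hi⟩ := hmem
    simp only [hF] at hi
    split_ifs at hi with h
    · simp only [Finset.mem_union, Finset.mem_image] at hi
      rcases hi with ⟨b, hb, hsb⟩ | ⟨a, ha, hsa⟩
      · rcases Sym2.eq_iff.mp hsb with ⟨h1, h2⟩ | ⟨h1, h2⟩
        · exact h1 ▸ h2 ▸ hbic i _ h.1.choose_spec _ hb
        · exact h1 ▸ h2 ▸ (hbic i _ h.1.choose_spec _ hb).symm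
      · rcases Sym2.eq_iff.mp hsa with ⟨h1, h2⟩ | ⟨h1, h2⟩
        · exact h1 ▸ h2 ▸ (hbic i _ ha _ h.2.choose_spec).symm
        · exact h1 ▸ h2 ▸ hbic i _ ha _ h.2.choose_spec
    · simp at hi
  · -- 3-hop paths
    intro u v huv
    obtain ⟨i, hcase⟩ := hcov u v huv
    -- wlog-style: handle both cases by a common construction
    have key : ∀ x y : V, x ∈ A i → y ∈ B i →
        ∃ p : (SimpleGraph.fromEdgeSet (↑T : Set (Sym2 V))).Walk x y, p.length ≤ 3 := by
      intro x y hx hy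
      have h : (A i).Nonempty ∧ (B i).Nonempty := ⟨⟨x, hx⟩, ⟨y, hy⟩⟩
      set a0 := h.1.choose with ha0
      set b0 := h.2.choose with hb0
      have ha0m : a0 ∈ A i := h.1.choose_spec
      have hb0m : b0 ∈ B i := h.2.choose_spec
      have hFi : F i = (B i).image (fun b => s(a0, b)) ∪ (A i).image (fun a => s(b0, a)) := by
        rw [hF]; simp only [dif_pos h]; rfl
      have memT : ∀ e ∈ F i, e ∈ (↑T : Set (Sym2 V)) := by
        intro e he
        simp only [hT, Finset.coe_biUnion, Set.mem_iUnion, Finset.mem_coe]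
        exact ⟨i, Finset.mem_univ i, he⟩
      have hne : ∀ p ∈ A i, ∀ q ∈ B i, p ≠ q := by
        intro p hp q hq hpq
        exact Finset.disjoint_left.mp (hdisj i) hp (hpq ▸ hq)
      have e1 : (SimpleGraph.fromEdgeSet (↑T : Set (Sym2 V))).Adj x b0 := by
        rw [SimpleGraph.fromEdgeSet_adj]
        refine ⟨memT _ ?_, hne x hx b0 hb0m⟩
        rw [hFi]
        exact Finset.mem_union_right _ (Finset.mem_image.mpr ⟨x, hx, Sym2.eq_swap⟩)
      have e2 : (SimpleGraph.fromEdgeSet (↑T : Set (Sym2 V))).Adj b0 a0 := by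
        rw [SimpleGraph.fromEdgeSet_adj]
        refine ⟨memT _ ?_, (hne a0 ha0m b0 hb0m).symm⟩
        rw [hFi]
        exact Finset.mem_union_left _ (Finset.mem_image.mpr ⟨b0, hb0m, Sym2.eq_swap⟩)
      have e3 : (SimpleGraph.fromEdgeSet (↑T : Set (Sym2 V))).Adj a0 y := by
        rw [SimpleGraph.fromEdgeSet_adj]
        refine ⟨memT _ ?_, hne a0 ha0m y hy⟩
        rw [hFi]
        exact Finset.mem_union_left _ (Finset.mem_image.mpr ⟨y, hy, rfl⟩)
      exact ⟨SimpleGraph.Walk.cons e1 (SimpleGraph.Walk.cons e2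
        (SimpleGraph.Walk.cons e3 SimpleGraph.Walk.nil)), by simp⟩
    rcases hcase with ⟨hu, hv⟩ | ⟨hv, hu⟩
    · exact key u v hu hv
    · obtain ⟨p, hp⟩ := key v u hv hu
      exact ⟨p.reverse, by simpa using hp⟩
  · -- edge count
    rw [one_mul]
    have hsub : (SimpleGraph.fromEdgeSet (↑T : Set (Sym2 V))).edgeSet ⊆ ↑T := by
      rw [SimpleGraph.edgeSet_fromEdgeSet]
      exact Set.diff_subset
    calc (SimpleGraph.fromEdgeSet (↑T : Set (Sym2 V))).edgeSet.ncard
        ≤ (↑T : Set (Sym2 V)).ncard := Set.ncard_le_ncard hsub T.finite_toSet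
      _ = T.card := Set.ncard_coe_finset T
      _ ≤ ∑ i, (F i).card := Finset.card_biUnion_le
      _ ≤ ∑ i, ((A i).card + (B i).card) := by
          apply Finset.sum_le_sum
          intro i _
          simp only [hF]
          split_ifs with h
          · calc ((B i).image _ ∪ (A i).image _).card
                ≤ ((B i).image (fun b => s(h.1.choose, b))).card
                  + ((A i).image (fun a => s(h.2.choose, a))).card :=
                  Finset.card_union_le _ _
              _ ≤ (B i).card + (A i).card :=
                  Nat.add_le_add (Finset.card_image_le) (Finset.card_image_le)
              _ = (A i).card + (B i).card := Nat.add_comm _ _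
          · simp
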